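/- The closure C_T also commutes with union and Kleene star: C_T(L ∪ K) = C_T(L) ∪ C_T(K) and C_T(L*) = (C_T(L))*, for all languages L, K over Σ ∪ {⊤}. -/

import Mathlib

/-- One rewriting step: `u →_T v` iff `u = l ++ w ++ r` and `v = l ++ ⊤ :: r`. -/
def stepT {α : Type*} (top : α) (u v : List α) : Prop :=
  ∃ l w r : List α, u = l ++ w ++ r ∧ v = l ++ top :: r

/-- `C_T(L) = {u | u →_T* v for some v ∈ L}`. -/
def CT {α : Type*} (top : α) (L : Language α) : Language α :=
  {u | ∃ v ∈ L, Relation.ReflTransGen (stepT top) u v}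

namespace CTaux

variable {α : Type*} {top : α}

lemma step_append_left {u v : List α} (x : List α) (h : stepT top u v) :
    stepT top (x ++ u) (x ++ v) := by
  obtain ⟨l, w, r, hu, hv⟩ := h
  exact ⟨x ++ l, w, r, by simp [hu], by simp [hv]⟩

lemma step_append_right {u v : List α} (x : List α) (h : stepT top u v) :
    stepT top (u ++ x) (v ++ x) := by
  obtain ⟨l, w, r, hu, hv⟩ := h
  exact ⟨l, w, r ++ x, by simp [hu], by simp [hv]⟩

lemma rtg_append {u₁ v₁ u₂ v₂ : List α}
    (h₁ : Relation.ReflTransGen (stepT top) u₁ v₁)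
    (h₂ : Relation.ReflTransGen (stepT top) u₂ v₂) :
    Relation.ReflTransGen (stepT top) (u₁ ++ u₂) (v₁ ++ v₂) := by
  have hA : Relation.ReflTransGen (stepT top) (u₁ ++ u₂) (v₁ ++ u₂) :=
    Relation.ReflTransGen.lift (fun t => t ++ u₂) (fun a b h => step_append_right u₂ h) _ _ h₁
  have hB : Relation.ReflTransGen (stepT top) (v₁ ++ u₂) (v₁ ++ v₂) :=
    Relation.ReflTransGen.lift (fun t => v₁ ++ t) (fun a b h => step_append_left v₁ h) _ _ h₂
  exact hA.trans hB

lemma step_ne_nil {u v : List α} (h : stepT top u v) : v ≠ [] := by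
  obtain ⟨l, w, r, hu, hv⟩ := h
  simp [hv]

lemma rtg_nil {u : List α} (h : Relation.ReflTransGen (stepT top) u []) : u = [] := by
  rcases h.cases_tail with h | ⟨b, _, hb⟩
  · exact h.symm
  · exact absurd rfl (step_ne_nil hb)

lemma rtg_split {u v₁ v₂ : List α}
    (h : Relation.ReflTransGen (stepT top) u (v₁ ++ v₂)) :
    ∃ u₁ u₂, u = u₁ ++ u₂ ∧ Relation.ReflTransGen (stepT top) u₁ v₁ ∧
      Relation.ReflTransGen (stepT top) u₂ v₂ := by
  induction h using Relation.ReflTransGen.head_induction_on with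
  | refl => exact ⟨v₁, v₂, rfl, .refl, .refl⟩
  | head hstep _ ih =>
      obtain ⟨u₁', u₂', hb, h₁, h₂⟩ := ih
      obtain ⟨l, w, r, hu, hb'⟩ := hstep
      rw [hb] at hb'
      rcases List.append_eq_append_iff.mp hb' with ⟨a', ha1, ha2⟩ | ⟨c', hc1, hc2⟩
      · -- l = u₁' ++ a', u₂' = a' ++ top :: r
        refine ⟨u₁', a' ++ w ++ r, by simp [hu, ha1], h₁, ?_⟩
        exact Relation.ReflTransGen.head ⟨a', w, r, rfl, ha2⟩ h₂
      · -- u₁' = l ++ c', top :: r = c' ++ u₂'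
        match c', hc2 with
        | [], hc2 =>
            refine ⟨u₁', w ++ r, by simp [hu, hc1], h₁, ?_⟩
            exact Relation.ReflTransGen.head ⟨[], w, r, rfl, by simpa using hc2.symm⟩ h₂
        | (x :: c''), hc2 =>
            obtain ⟨hx, hr⟩ : top = x ∧ r = c'' ++ u₂' := by simpa using hc2
            refine ⟨l ++ w ++ c'', u₂', by simp [hu, hr], ?_, h₂⟩
            refine Relation.ReflTransGen.head ⟨l, w, c'', rfl, rfl⟩ ?_
            subst hx
            rwa [hc1] at h₁

end CTaux

/-- `C_T` commutes with union and Kleene star. -/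
theorem CT_union_kstar {α : Type*} (top : α) (L K : Language α) :
    CT top (L + K) = CT top L + CT top K ∧
    CT top (KStar.kstar L) = KStar.kstar (CT top L) := by
  constructor
  · ext x
    constructor
    · rintro ⟨v, hv | hv, h⟩
      · exact Or.inl ⟨v, hv, h⟩
      · exact Or.inr ⟨v, hv, h⟩
    · rintro (⟨v, hv, h⟩ | ⟨v, hv, h⟩)
      · exact ⟨v, Or.inl hv, h⟩
      · exact ⟨v, Or.inr hv, h⟩
  · ext x
    constructor
    · rintro ⟨v, hv, h⟩
      rw [Language.mem_kstar] at hv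
      obtain ⟨S, rfl, hS⟩ := hv
      rw [Language.mem_kstar]
      induction S generalizing x with
      | nil =>
          exact ⟨[], by simpa using CTaux.rtg_nil (by simpa using h), by simp⟩
      | cons y S ih =>
          obtain ⟨x₁, x₂, rfl, h₁, h₂⟩ :=
            CTaux.rtg_split (v₁ := y) (v₂ := S.flatten) (by simpa using h)
          obtain ⟨T, hT, hTmem⟩ := ih x₂ (fun z hz => hS z (List.mem_cons_of_mem _ hz)) h₂
          refine ⟨x₁ :: T, by simp [hT], ?_⟩
          intro z hz
          rcases List.mem_cons.mp hz with rfl | hz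
          · exact ⟨y, hS y (by simp), h₁⟩
          · exact hTmem z hz
    · intro hx
      rw [Language.mem_kstar] at hx
      obtain ⟨S, rfl, hS⟩ := hx
      induction S with
      | nil =>
          exact ⟨[], by rw [Language.mem_kstar]; exact ⟨[], by simp⟩,
            by simpa using Relation.ReflTransGen.refl⟩
      | cons y S ih =>
          obtain ⟨v, hv, h⟩ := hS y (by simp)
          obtain ⟨v', hv', h'⟩ := ih (fun z hz => hS z (List.mem_cons_of_mem _ hz))
          rw [Language.mem_kstar] at hv'
          obtain ⟨T, rfl, hT⟩ := hv'
          refine ⟨v ++ T.flatten, ?_, by simpa using CTaux.rtg_append h h'⟩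
          rw [Language.mem_kstar]
          refine ⟨v :: T, by simp, ?_⟩
          intro z hz
          rcases List.mem_cons.mp hz with rfl | hz
          exacts [hv, hT z hz]
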